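/- Let Y_(1) ≤ Y_(2) ≤ ... ≤ Y_(n) be the order statistics of n i.i.d. unit Fréchet random variables, let t > 0, and let 0 < x_1 ≤ x_2 ≤ ... ≤ x_n be positive reals. Define f_n(t, x_1, ..., x_n) = P(Y_(1) ≤ t·x_1, Y_(2) ≤ t·x_2, ..., Y_(n) ≤ t·x_n), with f_0(t) = 1. Then f_n satisfies the recursion f_n(t, x_1, ..., x_n) = Σ_{i=1}^{n} binom(n, i) · (−1)^{i+1} · e^{−i/(t·x_{n−i+1})} · f_{n−i}(t, x_1, ..., x_{n−i}). -/

import Mathlib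

open MeasureTheory ProbabilityTheory Filter Finset Real Topology ENNReal

/-- `orderStat n v i` is the `i`-th order statistic (1-indexed) of the values
`v 0, …, v (n-1)`, i.e. the `i`-th smallest among them. -/
noncomputable def orderStat (n : ℕ) (v : ℕ → ℝ) (i : ℕ) : ℝ :=
  ((List.ofFn fun j : Fin n => v j).insertionSort (· ≤ ·)).getD (i - 1) 0

/-- The cumulative distribution function of the unit Fréchet distribution:
`F(x) = exp(-1/x)` for `x > 0` and `0` otherwise. -/
noncomputable def frechetCDF (x : ℝ) : ℝ := if 0 < x then Real.exp (-x⁻¹) else 0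

/-- number of `j ∈ T` with `v j ≤ c` -/
noncomputable def cge {α : Type*} (T : Finset α) (v : α → ℝ) (c : ℝ) : ℕ :=
  (T.filter fun j => v j ≤ c).card

/-- the "counting event" for order statistics -/
def CE {α : Type*} (T : Finset α) (v : α → ℝ) (a : ℕ → ℝ) : Prop :=
  ∀ k, 1 ≤ k → k ≤ T.card → k ≤ cge T v (a k)

lemma cge_mono {α : Type*} {T T' : Finset α} (h : T ⊆ T') (v : α → ℝ) (c : ℝ) :
    cge T v c ≤ cge T' v c := by
  classical exact Finset.card_le_card (Finset.filter_subset_filter _ h)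

lemma cge_eq_card {α : Type*} {T : Finset α} {v : α → ℝ} {c : ℝ}
    (h : ∀ j ∈ T, v j ≤ c) : cge T v c = T.card := by
  classical
  unfold cge
  rw [Finset.filter_true_of_mem h]

lemma all_le_of_cge {α : Type*} {T : Finset α} {v : α → ℝ} {c : ℝ}
    (h : T.card ≤ cge T v c) : ∀ j ∈ T, v j ≤ c := by
  classical
  have heq := Finset.eq_of_subset_of_card_le (Finset.filter_subset _ T) h
  intro j hj
  rw [← heq] at hj
  exact (Finset.mem_filter.1 hj).2

lemma cge_eq_sum {α : Type*} (T : Finset α) (v : α → ℝ) (c : ℝ) :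
    cge T v c = ∑ j ∈ T, if v j ≤ c then 1 else 0 := by
  classical
  unfold cge; rw [Finset.card_filter]

private lemma countP_ofFn {m : ℕ} (f : Fin m → ℝ) (c : ℝ) :
    (List.ofFn f).countP (fun y => decide (y ≤ c)) = ∑ i : Fin m, if f i ≤ c then 1 else 0 := by
  induction m with
  | zero => simp
  | succ m ih =>
    rw [List.ofFn_succ, List.countP_cons, Fin.sum_univ_succ, ih]
    by_cases h : f 0 ≤ c <;> simp [h] <;> omega

lemma orderStat_le_iff {m : ℕ} (v : ℕ → ℝ) {k : ℕ} (hk1 : 1 ≤ k) (hk2 : k ≤ m) (c : ℝ) :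
    orderStat m v k ≤ c ↔ k ≤ cge (Finset.range m) v c := by
  classical
  set l := (List.ofFn fun j : Fin m => v j).insertionSort (· ≤ ·) with hl
  have hlen : l.length = m := by
    rw [hl, List.length_insertionSort, List.length_ofFn]
  have hsort : l.Pairwise (· ≤ ·) := List.pairwise_insertionSort _ _
  have hcnt : cge (Finset.range m) v c = l.countP (fun y => decide (y ≤ c)) := by
    rw [hl, ((List.perm_insertionSort (· ≤ ·) _)).countP_eq, countP_ofFn,
      cge_eq_sum, Finset.sum_range]
  have hkl : k - 1 < l.length := by omega
  have hget : orderStat m v k = l[k-1] := List.getD_eq_getElem l 0 hkl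
  rw [hget, hcnt]
  constructor
  · intro h
    have htd := l.take_append_drop k
    have hlenk : (l.take k).length = k := by
      rw [List.length_take]; omega
    have htk : (l.take k).countP (fun y => decide (y ≤ c)) = k := by
      rw [List.countP_eq_length.2, hlenk]
      intro y hy
      obtain ⟨i, hi, rfl⟩ := List.mem_take_iff_getElem.1 hy
      have hik : i ≤ k - 1 := by
        rw [hlen] at hi; omega
      have : l[i] ≤ l[k-1] := by
        rcases lt_or_eq_of_le hik with hlt | heq
        · have := hsort.rel_get_of_lt (a := ⟨i, by omega⟩) (b := ⟨k-1, hkl⟩) hlt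
          simpa using this
        · subst heq; exact le_refl _
      simpa using le_trans this h
    calc k = (l.take k).countP (fun y => decide (y ≤ c)) := htk.symm
    _ ≤ (l.take k).countP _ + (l.drop k).countP (fun y => decide (y ≤ c)) := Nat.le_add_right _ _
    _ = l.countP (fun y => decide (y ≤ c)) := by rw [← List.countP_append, htd]
  · intro h
    by_contra hc
    push_neg at hc
    have hdrop : (l.drop (k-1)).countP (fun y => decide (y ≤ c)) = 0 := by
      rw [List.countP_eq_zero]
      intro y hy
      obtain ⟨i, hi, rfl⟩ := List.mem_drop_iff_getElem.1 hy
      have : l[k-1] ≤ l[(k-1) + i] := by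
        rcases Nat.eq_zero_or_pos i with rfl | hpos
        · simp
        · have := hsort.rel_get_of_lt (a := ⟨k-1, hkl⟩)
            (b := ⟨k-1+i, by omega⟩) (by simp; omega)
          simpa using this
      simp only [decide_eq_true_eq]
      intro hyc
      exact absurd (le_trans this hyc) (not_le.2 hc)
    have : l.countP (fun y => decide (y ≤ c)) ≤ k - 1 := by
      calc l.countP (fun y => decide (y ≤ c))
          = (l.take (k-1)).countP _ + (l.drop (k-1)).countP (fun y => decide (y ≤ c)) := by
            rw [← List.countP_append, l.take_append_drop]
      _ = (l.take (k-1)).countP _ := by rw [hdrop, Nat.add_zero]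
      _ ≤ (l.take (k-1)).length := List.countP_le_length
      _ ≤ k - 1 := by rw [List.length_take]; omega
    omega

lemma orderStat_event_iff (m : ℕ) (v : ℕ → ℝ) (a : ℕ → ℝ) :
    (∀ i : Fin m, orderStat m v (i + 1) ≤ a (i + 1)) ↔ CE (Finset.range m) v a := by
  constructor
  · intro h k hk1 hk2
    rw [Finset.card_range] at hk2
    have := h ⟨k - 1, by omega⟩
    simp only at this
    rw [Nat.sub_add_cancel hk1] at this
    exact (orderStat_le_iff v hk1 hk2 _).1 this
  · intro h i
    have hk1 : 1 ≤ (i : ℕ) + 1 := by omega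
    have hk2 : (i : ℕ) + 1 ≤ m := by omega
    exact (orderStat_le_iff v hk1 hk2 _).2 (h _ hk1 (by rw [Finset.card_range]; exact hk2))

lemma chi_toggle {α : Type*} [DecidableEq α] (R : Finset α) (v : α → ℝ) (a : ℕ → ℝ)
    (ha : ∀ i j, 1 ≤ i → i ≤ j → j ≤ R.card → a i ≤ a j)
    {m : α} (hmR : m ∈ R) (hmax : ∀ j ∈ R, v j ≤ v m)
    (S : Finset α) (hS : S ⊆ R)
    (h1 : ∀ j ∈ S, v j ≤ a (R.card - S.card + 1)) (h2 : CE (R \ S) v a) :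
    (∀ j ∈ (if m ∈ S then S.erase m else insert m S),
        v j ≤ a (R.card - (if m ∈ S then S.erase m else insert m S).card + 1)) ∧
      CE (R \ (if m ∈ S then S.erase m else insert m S)) v a := by
  set n := R.card with hn
  set i := S.card with hi
  have hin : i ≤ n := Finset.card_le_card hS
  have hTcard : (R \ S).card = n - i := by rw [Finset.card_sdiff_of_subset hS]
  -- all elements of R \ S are ≤ a (n - i) (when R \ S is nonempty)
  have allT : ∀ j ∈ R \ S, v j ≤ a (n - i) := by
    rcases Nat.eq_zero_or_pos (n - i) with h0 | hpos
    · intro j hj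
      have : (R \ S).card = 0 := by omega
      rw [Finset.card_eq_zero] at this
      rw [this] at hj
      exact absurd hj (Finset.notMem_empty j)
    · exact all_le_of_cge (by rw [hTcard]; exact h2 (n - i) hpos (by omega))
  by_cases hm : m ∈ S
  · -- case m ∈ S : erase m from S
    simp only [if_pos hm]
    have hi1 : 1 ≤ i := Finset.card_pos.2 ⟨m, hm⟩
    have hcard' : (S.erase m).card = i - 1 := by rw [Finset.card_erase_of_mem hm]
    have hT' : R \ S.erase m = insert m (R \ S) := by
      ext j
      simp only [Finset.mem_sdiff, Finset.mem_erase, Finset.mem_insert]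
      by_cases hjm : j = m
      · subst hjm; tauto
      · tauto
    constructor
    · intro j hj
      have hjS : j ∈ S := Finset.mem_of_mem_erase hj
      have hjm : j ≠ m := Finset.ne_of_mem_erase hj
      have hi2 : 2 ≤ i := Finset.one_lt_card.2 ⟨j, hjS, m, hm, hjm⟩
      have : a (n - i + 1) ≤ a (n - (i-1) + 1) := by
        have : n - (i - 1) + 1 = (n - i + 1) + 1 := by omega
        rw [this]
        exact ha _ _ (by omega) (by omega) (by omega)
      rw [hcard']
      exact le_trans (h1 j hjS) this
    · -- CE for insert m (R \ S)
      rw [hT']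
      intro k hk1 hk2
      have hmT : m ∉ R \ S := fun h => (Finset.mem_sdiff.1 h).2 hm
      have hcardins : (insert m (R \ S)).card = n - i + 1 := by
        rw [Finset.card_insert_of_notMem hmT, hTcard]
      rw [hcardins] at hk2
      have hkni : k ≤ n - i ∨ k = n - i + 1 := by omega
      rcases hkni with hk | hk
      · calc k ≤ cge (R \ S) v (a k) := h2 k hk1 (by omega)
        _ ≤ cge (insert m (R \ S)) v (a k) := cge_mono (Finset.subset_insert _ _) _ _
      · have hall : ∀ j ∈ insert m (R \ S), v j ≤ a k := by
          intro j hj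
          rcases Finset.mem_insert.1 hj with rfl | hj'
          · rw [hk]; exact h1 j hm
          · have h' := allT j hj'
            rcases Nat.eq_zero_or_pos (n - i) with h0 | hpos
            · exfalso
              have : (R \ S).card = 0 := by omega
              rw [Finset.card_eq_zero] at this
              rw [this] at hj'
              exact absurd hj' (Finset.notMem_empty j)
            · refine le_trans h' ?_
              rw [hk]
              exact ha _ _ (by omega) (by omega) (by omega)
        rw [cge_eq_card hall, hcardins]; omega
  · -- case m ∉ S : insert m into S
    simp only [if_neg hm]
    have hmT : m ∈ R \ S := Finset.mem_sdiff.2 ⟨hmR, hm⟩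
    have hTpos : 1 ≤ n - i := by
      have : 0 < (R \ S).card := Finset.card_pos.2 ⟨m, hmT⟩
      omega
    have hcard' : (insert m S).card = i + 1 := by rw [Finset.card_insert_of_notMem hm]
    have hvm : v m ≤ a (n - i) := allT m hmT
    have hT' : R \ insert m S = (R \ S).erase m := by
      ext j
      simp only [Finset.mem_sdiff, Finset.mem_insert, Finset.mem_erase, not_or]
      tauto
    constructor
    · intro j hj
      have : n - (i + 1) + 1 = n - i := by omega
      rw [hcard', this]
      rcases Finset.mem_insert.1 hj with rfl | hj'
      · exact hvm
      · exact le_trans (hmax j (hS hj')) hvm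
    · rw [hT']
      intro k hk1 hk2
      have hcarde : ((R \ S).erase m).card = n - i - 1 := by
        rw [Finset.card_erase_of_mem hmT, hTcard]
      rw [hcarde] at hk2
      by_cases hc : v m ≤ a k
      · have hall : ∀ j ∈ (R \ S).erase m, v j ≤ a k := by
          intro j hj
          have hjR : j ∈ R := (Finset.mem_sdiff.1 (Finset.mem_of_mem_erase hj)).1
          exact le_trans (hmax j hjR) hc
        rw [cge_eq_card hall, hcarde]; omega
      · have : cge ((R \ S).erase m) v (a k) = cge (R \ S) v (a k) := by
          classical
          unfold cge
          rw [Finset.filter_erase, Finset.erase_eq_of_notMem]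
          intro hmem
          exact hc (Finset.mem_filter.1 hmem).2
        rw [this]
        exact h2 k hk1 (by omega)

open Classical in
lemma invol_sum {α : Type*} [DecidableEq α] (R : Finset α) (hR : R.Nonempty) (v : α → ℝ)
    (a : ℕ → ℝ) (ha : ∀ i j, 1 ≤ i → i ≤ j → j ≤ R.card → a i ≤ a j) :
    ∑ S ∈ R.powerset, ((-1 : ℝ) ^ S.card *
      (if ((∀ j ∈ S, v j ≤ a (R.card - S.card + 1)) ∧ CE (R \ S) v a) then 1 else 0)) = 0 := by
  obtain ⟨m, hmR, hmax⟩ := R.exists_max_image v hR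
  have hgg : ∀ S : Finset α, (if m ∈ (if m ∈ S then S.erase m else insert m S) then
      (if m ∈ S then S.erase m else insert m S).erase m
      else insert m (if m ∈ S then S.erase m else insert m S)) = S := by
    intro S
    by_cases hm : m ∈ S
    · rw [if_pos hm, if_neg (Finset.notMem_erase m S), Finset.insert_erase hm]
    · rw [if_neg hm, if_pos (Finset.mem_insert_self m S), Finset.erase_insert hm]
  have hsub : ∀ S : Finset α, S ⊆ R → (if m ∈ S then S.erase m else insert m S) ⊆ R := by
    intro S hS
    by_cases hm : m ∈ S
    · rw [if_pos hm]; exact (Finset.erase_subset _ _).trans hS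
    · rw [if_neg hm]; exact Finset.insert_subset hmR hS
  have hiff : ∀ S : Finset α, S ⊆ R →
      (((∀ j ∈ S, v j ≤ a (R.card - S.card + 1)) ∧ CE (R \ S) v a) ↔
        ((∀ j ∈ (if m ∈ S then S.erase m else insert m S), v j ≤
            a (R.card - (if m ∈ S then S.erase m else insert m S).card + 1)) ∧
          CE (R \ (if m ∈ S then S.erase m else insert m S)) v a)) := by
    intro S hS
    constructor
    · rintro ⟨h1, h2⟩
      exact chi_toggle R v a ha hmR hmax S hS h1 h2
    · rintro ⟨h1, h2⟩
      have hback := chi_toggle R v a ha hmR hmax _ (hsub S hS) h1 h2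
      rwa [hgg S] at hback
  have hsign : ∀ S : Finset α,
      (-1 : ℝ) ^ (if m ∈ S then S.erase m else insert m S).card = -(-1 : ℝ) ^ S.card := by
    intro S
    by_cases hm : m ∈ S
    · have h1 : 1 ≤ S.card := Finset.card_pos.2 ⟨m, hm⟩
      rw [if_pos hm, Finset.card_erase_of_mem hm]
      conv_rhs => rw [show S.card = (S.card - 1) + 1 by omega]
      rw [pow_succ]; ring
    · rw [if_neg hm, Finset.card_insert_of_notMem hm, pow_succ]; ring
  refine Finset.sum_involution (fun S _ => if m ∈ S then S.erase m else insert m S)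
    ?_ ?_ ?_ ?_
  · intro S hSmem
    have hS : S ⊆ R := Finset.mem_powerset.1 hSmem
    by_cases hchi : ((∀ j ∈ S, v j ≤ a (R.card - S.card + 1)) ∧ CE (R \ S) v a)
    · rw [if_pos hchi, if_pos (((hiff S hS)).1 hchi), hsign S]; ring
    · rw [if_neg hchi, if_neg (fun h => hchi ((hiff S hS).2 h)), hsign S]; ring
  · intro S _ _
    by_cases hm : m ∈ S
    · rw [if_pos hm]
      intro h
      rw [← h] at hm
      exact (Finset.notMem_erase m S) hm
    · rw [if_neg hm]
      intro h
      exact hm (h ▸ Finset.mem_insert_self m S)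
  · intro S hSmem
    exact Finset.mem_powerset.2 (hsub S (Finset.mem_powerset.1 hSmem))
  · intro S hSmem
    exact hgg S



lemma measurable_cge {δ : Type*} [MeasurableSpace δ] {α : Type*} (T : Finset α)
    (f : α → δ → ℝ) (hf : ∀ i, Measurable (f i)) (c : ℝ) :
    Measurable fun ω => cge T (fun j => f j ω) c := by
  simp only [cge_eq_sum]
  refine Finset.measurable_sum _ fun j _ => ?_
  exact Measurable.ite (measurableSet_le (hf j) measurable_const)
    measurable_const measurable_const

lemma measurableSet_CE {δ : Type*} [MeasurableSpace δ] {α : Type*} (T : Finset α)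
    (f : α → δ → ℝ) (hf : ∀ i, Measurable (f i)) (a : ℕ → ℝ) :
    MeasurableSet {ω | CE T (fun j => f j ω) a} := by
  have h : {ω | CE T (fun j => f j ω) a} =
      ⋂ k ∈ Set.Icc 1 T.card, {ω | k ≤ cge T (fun j => f j ω) (a k)} := by
    ext ω
    simp only [Set.mem_iInter, Set.mem_setOf_eq, Set.mem_Icc, CE]
    constructor
    · intro h k hk; exact h k hk.1 hk.2
    · intro h k hk1 hk2; exact h k ⟨hk1, hk2⟩
  rw [h]
  refine MeasurableSet.biInter (Set.to_countable _) fun k _ => ?_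
  exact measurableSet_le measurable_const (measurable_cge T f hf (a k))

lemma cge_map {α β : Type*} (e : β ↪ α) (T : Finset β) (v : α → ℝ) (c : ℝ) :
    cge (T.map e) v c = cge T (fun j => v (e j)) c := by
  unfold cge
  rw [Finset.filter_map, Finset.card_map]
  rfl

lemma cge_subtype {α : Type*} (T : Finset α) (v : α → ℝ) (c : ℝ) :
    cge (Finset.univ : Finset T) (fun i => v i) c = cge T v c := by
  conv_rhs => rw [← Finset.attach_map_val (s := T)]
  rw [cge_map, Finset.univ_eq_attach]
  rfl

lemma cge_equiv {α β : Type*} [Fintype α] [Fintype β] (e : α ≃ β) (w : β → ℝ) (c : ℝ) :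
    cge (Finset.univ : Finset α) (fun i => w (e i)) c = cge (Finset.univ : Finset β) w c := by
  unfold cge
  exact Finset.card_equiv e (by intro i; simp)

lemma map_restrict_eq_pi {Ω : Type*} [MeasurableSpace Ω] (μ : Measure Ω) [IsProbabilityMeasure μ]
    (Y : ℕ → Ω → ℝ) (hmeas : ∀ i, Measurable (Y i))
    (hindep : iIndepFun Y μ) (T : Finset ℕ) :
    μ.map (fun ω (i : T) => Y i ω) = Measure.pi (fun i : T => μ.map (Y i)) := by
  haveI : ∀ i : T, IsProbabilityMeasure (μ.map (Y i)) :=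
    fun i => Measure.isProbabilityMeasure_map (hmeas i).aemeasurable
  refine (Measure.pi_eq fun s hs => ?_).symm
  rw [Measure.map_apply (measurable_pi_lambda (fun ω (i : T) => Y i ω) fun i => hmeas i) (MeasurableSet.univ_pi hs)]
  classical
  have hset : (fun ω (i : T) => Y i ω) ⁻¹' (Set.univ.pi s) =
      ⋂ i ∈ T, Y i ⁻¹' (if h : i ∈ T then s ⟨i, h⟩ else Set.univ) := by
    ext ω
    simp only [Set.mem_preimage, Set.mem_univ_pi, Set.mem_iInter]
    constructor
    · intro h i hi; rw [dif_pos hi]; exact h ⟨i, hi⟩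
    · intro h i; have := h i i.2; rwa [dif_pos i.2] at this
  rw [hset]
  rw [hindep.measure_inter_preimage_eq_mul T (fun i hi => ?_)]
  swap
  · by_cases h : i ∈ T
    · rw [dif_pos h]; exact hs ⟨i, h⟩
    · rw [dif_neg h]; exact MeasurableSet.univ
  rw [← Finset.prod_coe_sort T (fun j => μ (Y j ⁻¹' (if h : j ∈ T then s ⟨j, h⟩ else Set.univ)))]
  refine (Finset.prod_congr rfl fun i _ => ?_).symm
  rw [dif_pos i.2, Measure.map_apply (hmeas i) (hs i)]

lemma measure_CE_eq {Ω : Type*} [MeasurableSpace Ω] (μ : Measure Ω) [IsProbabilityMeasure μ]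
    (Y : ℕ → Ω → ℝ) (hmeas : ∀ i, Measurable (Y i))
    (hindep : iIndepFun Y μ)
    (hident : ∀ i, μ.map (Y i) = μ.map (Y 0))
    (a : ℕ → ℝ) (T₁ T₂ : Finset ℕ) (hcard : T₁.card = T₂.card) :
    μ {ω | CE T₁ (fun j => Y j ω) a} = μ {ω | CE T₂ (fun j => Y j ω) a} := by
  classical
  have hB : ∀ T : Finset ℕ, {ω | CE T (fun j => Y j ω) a} =
      (fun ω (i : T) => Y i ω) ⁻¹' {w : T → ℝ | CE Finset.univ w a} := by
    intro T
    ext ω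
    simp only [Set.mem_preimage, Set.mem_setOf_eq, CE, Finset.card_univ, Fintype.card_coe]
    constructor
    · intro h k h1 h2
      rw [show (fun i : T => Y (↑i) ω) = (fun i : T => (fun j => Y j ω) ↑i) from rfl,
        cge_subtype T (fun j => Y j ω) (a k)]
      exact h k h1 h2
    · intro h k h1 h2
      have := h k h1 h2
      rwa [show (fun i : T => Y (↑i) ω) = (fun i : T => (fun j => Y j ω) ↑i) from rfl,
        cge_subtype T (fun j => Y j ω) (a k)] at this
  have hBmeas : ∀ T : Finset ℕ, MeasurableSet {w : T → ℝ | CE Finset.univ w a} := by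
    intro T
    have := measurableSet_CE (Finset.univ : Finset T)
      (fun (i : T) (w : T → ℝ) => w i) (fun i => measurable_pi_apply i) a
    simpa using this
  have hJ : ∀ T : Finset ℕ, Measurable (fun ω (i : T) => Y i ω) :=
    fun T => measurable_pi_lambda _ fun i => hmeas i
  rw [hB T₁, hB T₂, ← Measure.map_apply (hJ T₁) (hBmeas T₁),
    ← Measure.map_apply (hJ T₂) (hBmeas T₂),
    map_restrict_eq_pi μ Y hmeas hindep T₁, map_restrict_eq_pi μ Y hmeas hindep T₂]
  have hident₁ : (fun i : T₁ => μ.map (Y i)) = fun _ : T₁ => μ.map (Y 0) := by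
    funext i; exact hident i
  have hident₂ : (fun i : T₂ => μ.map (Y i)) = fun _ : T₂ => μ.map (Y 0) := by
    funext i; exact hident i
  rw [hident₁, hident₂]
  haveI : IsProbabilityMeasure (μ.map (Y 0)) :=
    Measure.isProbabilityMeasure_map (hmeas 0).aemeasurable
  set ν := μ.map (Y 0) with hν
  have e : (T₁ : Type) ≃ T₂ := Finset.equivOfCardEq hcard
  have hmp := measurePreserving_piCongrLeft (fun _ : T₂ => ν) e
  have hpre : (MeasurableEquiv.piCongrLeft (fun _ : T₂ => ℝ) e) ⁻¹'
      {w : T₂ → ℝ | CE Finset.univ w a} = {w : T₁ → ℝ | CE Finset.univ w a} := by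
    ext u
    simp only [Set.mem_preimage, Set.mem_setOf_eq, CE, Finset.card_univ, Fintype.card_coe]
    have hcomp : (fun i : T₁ =>
        (MeasurableEquiv.piCongrLeft (fun _ : T₂ => ℝ) e) u (e i)) = u := by
      funext i
      rw [MeasurableEquiv.coe_piCongrLeft]
      exact Equiv.piCongrLeft_apply_apply (fun _ : T₂ => ℝ) e u i
    constructor
    · intro h k h1 h2
      have := h k h1 (by rw [← hcard]; exact h2)
      rwa [← cge_equiv e ((MeasurableEquiv.piCongrLeft (fun _ : T₂ => ℝ) e) u) (a k), hcomp]
        at this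
    · intro h k h1 h2
      rw [← cge_equiv e ((MeasurableEquiv.piCongrLeft (fun _ : T₂ => ℝ) e) u) (a k), hcomp]
      exact h k h1 (by rw [hcard]; exact h2)
  rw [← hpre, hmp.measure_preimage (hBmeas T₂).nullMeasurableSet]

lemma measure_inter_CE_factor {Ω : Type*} [MeasurableSpace Ω] (μ : Measure Ω)
    [IsProbabilityMeasure μ] (Y : ℕ → Ω → ℝ) (hmeas : ∀ i, Measurable (Y i))
    (hindep : iIndepFun Y μ)
    (S T : Finset ℕ) (hST : Disjoint S T) (c : ℝ) (a : ℕ → ℝ) :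
    μ ({ω | ∀ j ∈ S, Y j ω ≤ c} ∩ {ω | CE T (fun j => Y j ω) a}) =
      μ {ω | ∀ j ∈ S, Y j ω ≤ c} * μ {ω | CE T (fun j => Y j ω) a} := by
  classical
  have h1 : {ω | ∀ j ∈ S, Y j ω ≤ c} =
      (fun ω (i : S) => Y i ω) ⁻¹' {w : S → ℝ | ∀ i : S, w i ≤ c} := by
    ext ω
    simp only [Set.mem_preimage, Set.mem_setOf_eq, Subtype.forall]
  have h2 : {ω | CE T (fun j => Y j ω) a} =
      (fun ω (i : T) => Y i ω) ⁻¹' {w : T → ℝ | CE Finset.univ w a} := by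
    ext ω
    simp only [Set.mem_preimage, Set.mem_setOf_eq, CE, Finset.card_univ, Fintype.card_coe]
    constructor
    · intro h k h1 h2
      rw [show (fun i : T => Y (↑i) ω) = (fun i : T => (fun j => Y j ω) ↑i) from rfl,
        cge_subtype T (fun j => Y j ω) (a k)]
      exact h k h1 h2
    · intro h k h1 h2
      have := h k h1 h2
      rwa [show (fun i : T => Y (↑i) ω) = (fun i : T => (fun j => Y j ω) ↑i) from rfl,
        cge_subtype T (fun j => Y j ω) (a k)] at this
  have hm1 : MeasurableSet {w : S → ℝ | ∀ i : S, w i ≤ c} := by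
    have : {w : S → ℝ | ∀ i : S, w i ≤ c} = ⋂ i : S, (fun w : S → ℝ => w i) ⁻¹' Set.Iic c := by
      ext w; simp [Set.mem_iInter]
    rw [this]
    exact MeasurableSet.iInter fun i => (measurable_pi_apply i) measurableSet_Iic
  have hm2 : MeasurableSet {w : T → ℝ | CE Finset.univ w a} := by
    have := measurableSet_CE (Finset.univ : Finset T)
      (fun (i : T) (w : T → ℝ) => w i) (fun i => measurable_pi_apply i) a
    simpa using this
  have hIF := hindep.indepFun_finset S T hST hmeas
  rw [h1, h2]
  exact hIF.measure_inter_preimage_eq_mul _ _ hm1 hm2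

lemma measure_all_le {Ω : Type*} [MeasurableSpace Ω] (μ : Measure Ω)
    [IsProbabilityMeasure μ] (Y : ℕ → Ω → ℝ)
    (hindep : iIndepFun Y μ) (S : Finset ℕ) (c : ℝ) :
    μ {ω | ∀ j ∈ S, Y j ω ≤ c} = ∏ j ∈ S, μ {ω | Y j ω ≤ c} := by
  classical
  have h : {ω | ∀ j ∈ S, Y j ω ≤ c} = ⋂ j ∈ S, Y j ⁻¹' Set.Iic c := by
    ext ω; simp [Set.mem_iInter]
  rw [h, hindep.measure_inter_preimage_eq_mul S (fun i _ => measurableSet_Iic)]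
  rfl

/-- Let `Y_(1) ≤ ⋯ ≤ Y_(n)` be the order statistics of `n` i.i.d.
unit Fréchet random variables, `t > 0` and `0 < x_1 ≤ ⋯ ≤ x_n`. Define
`f_m(t, x_1, …, x_m) = P(Y_(1) ≤ t x_1, …, Y_(m) ≤ t x_m)` (with `f_0(t) = 1`, and the
order statistics taken from `m` i.i.d. unit Fréchet variables). Then
`f_n = ∑_{i=1}^n C(n,i) (-1)^{i+1} e^{-i/(t x_{n-i+1})} f_{n-i}`. -/
theorem stmt16 {Ω : Type*} [MeasurableSpace Ω] (μ : Measure Ω) [IsProbabilityMeasure μ]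
    (Y : ℕ → Ω → ℝ)
    (hmeas : ∀ i, Measurable (Y i))
    (hindep : iIndepFun Y μ)
    (hY : ∀ i x, μ {ω | Y i ω ≤ x} = ENNReal.ofReal (frechetCDF x))
    (t : ℝ) (ht : 0 < t) (n : ℕ) (hn : 1 ≤ n) (x : ℕ → ℝ)
    (hxpos : ∀ i, 1 ≤ i → i ≤ n → 0 < x i)
    (hxmono : ∀ i j, 1 ≤ i → i ≤ j → j ≤ n → x i ≤ x j) :
    (μ {ω | ∀ i : Fin n,
        orderStat n (fun j => Y j ω) (i + 1) ≤ t * x (i + 1)}).toReal =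
      ∑ i ∈ Finset.Icc 1 n, (n.choose i : ℝ) * (-1 : ℝ) ^ (i + 1) *
        Real.exp (-((i : ℝ) / (t * x (n - i + 1)))) *
        (μ {ω | ∀ l : Fin (n - i),
          orderStat (n - i) (fun j => Y j ω) (l + 1) ≤ t * x (l + 1)}).toReal := by
  classical
  set a : ℕ → ℝ := fun k => t * x k with hadef
  have hamono : ∀ i j, 1 ≤ i → i ≤ j → j ≤ n → a i ≤ a j := fun i j h1 h2 h3 =>
    mul_le_mul_of_nonneg_left (hxmono i j h1 h2 h3) (le_of_lt ht)
  have hapos : ∀ k, 1 ≤ k → k ≤ n → 0 < a k := fun k h1 h2 => mul_pos ht (hxpos k h1 h2)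
  have hident : ∀ i, μ.map (Y i) = μ.map (Y 0) := by
    intro i
    haveI : IsProbabilityMeasure (μ.map (Y i)) :=
      Measure.isProbabilityMeasure_map (hmeas i).aemeasurable
    refine MeasureTheory.Measure.ext_of_Iic (μ.map (Y i)) (μ.map (Y 0)) fun q => ?_
    rw [Measure.map_apply (hmeas i) measurableSet_Iic,
      Measure.map_apply (hmeas 0) measurableSet_Iic]
    have hp : ∀ j : ℕ, Y j ⁻¹' Set.Iic q = {ω | Y j ω ≤ q} := fun j => rfl
    rw [hp i, hp 0, hY i q, hY 0 q]
  set G : Finset ℕ → Set Ω := fun T => {ω | CE T (fun j => Y j ω) a} with hGdef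
  have hGmeas : ∀ T, MeasurableSet (G T) := fun T => measurableSet_CE T Y hmeas a
  set E : Finset ℕ → Set Ω := fun S =>
    {ω | ∀ j ∈ S, Y j ω ≤ a (n - S.card + 1)} ∩ G (Finset.range n \ S) with hEdef
  have hEmeas : ∀ S, MeasurableSet (E S) := by
    intro S
    refine MeasurableSet.inter ?_ (hGmeas _)
    have h : {ω | ∀ j ∈ S, Y j ω ≤ a (n - S.card + 1)} =
        ⋂ j ∈ S, Y j ⁻¹' Set.Iic (a (n - S.card + 1)) := by
      ext ω; simp [Set.mem_iInter]
    rw [h]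
    exact MeasurableSet.biInter (Set.to_countable _)
      fun j _ => (hmeas j) measurableSet_Iic
  -- pointwise involution identity
  have hpoint : ∀ ω : Ω, ∑ S ∈ (Finset.range n).powerset,
      ((-1 : ℝ) ^ S.card * (E S).indicator (1 : Ω → ℝ) ω) = 0 := by
    intro ω
    have hinv := invol_sum (Finset.range n) ⟨0, Finset.mem_range.2 (by omega)⟩
      (fun j => Y j ω) a (by rw [Finset.card_range]; exact hamono)
    refine Eq.trans (Finset.sum_congr rfl fun S hS => ?_) hinv
    rw [Finset.card_range]
    congr 1
    rw [Set.indicator_apply]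
    by_cases h : (∀ j ∈ S, Y j ω ≤ a (n - S.card + 1)) ∧
        CE (Finset.range n \ S) (fun j => Y j ω) a
    · rw [if_pos h, if_pos (show ω ∈ E S from Set.mem_inter h.1 h.2)]
      rfl
    · rw [if_neg h, if_neg (show ω ∉ E S from fun hm => h ⟨fun j hj => hm.1 j hj, hm.2⟩)]
  -- integrate
  have hint : ∀ S : Finset ℕ, Integrable ((E S).indicator (1 : Ω → ℝ)) μ := by
    intro S
    rw [integrable_indicator_iff (hEmeas S)]
    exact integrableOn_const (measure_ne_top μ _)
  have h0 : ∑ S ∈ (Finset.range n).powerset,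
      ((-1 : ℝ) ^ S.card * (μ (E S)).toReal) = 0 := by
    have hInt : ∫ ω, (∑ S ∈ (Finset.range n).powerset,
        ((-1 : ℝ) ^ S.card * (E S).indicator (1 : Ω → ℝ) ω)) ∂μ = 0 := by
      simp only [hpoint]
      exact integral_zero Ω ℝ
    rw [integral_finset_sum _ (fun S _ => ((hint S).const_mul _))] at hInt
    rw [← hInt]
    refine Finset.sum_congr rfl fun S _ => ?_
    rw [integral_const_mul, integral_indicator_one (hEmeas S)]; rfl
  have hzero_mem : (∅ : Finset ℕ) ∈ (Finset.range n).powerset :=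
    Finset.empty_mem_powerset _
  have hE0 : E ∅ = G (Finset.range n) := by
    rw [hEdef]
    have h1 : {ω : Ω | ∀ j ∈ (∅ : Finset ℕ), Y j ω ≤ a (n - (∅ : Finset ℕ).card + 1)} =
        Set.univ := by
      ext ω; simp
    simp only [h1, Finset.sdiff_empty, Set.univ_inter]
  have hmain : (μ (G (Finset.range n))).toReal =
      ∑ S ∈ (Finset.range n).powerset.erase ∅,
        ((-1 : ℝ) ^ (S.card + 1) * (μ (E S)).toReal) := by
    have hsplit := Finset.add_sum_erase _
      (fun S : Finset ℕ => ((-1 : ℝ) ^ S.card * (μ (E S)).toReal)) hzero_mem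
    simp only [Finset.card_empty, pow_zero, one_mul, hE0] at hsplit
    have hneg : ∑ S ∈ (Finset.range n).powerset.erase ∅,
        ((-1 : ℝ) ^ (S.card + 1) * (μ (E S)).toReal)
        = - ∑ S ∈ (Finset.range n).powerset.erase ∅,
          ((-1 : ℝ) ^ S.card * (μ (E S)).toReal) := by
      rw [← Finset.sum_neg_distrib]
      exact Finset.sum_congr rfl fun S _ => by ring
    rw [hneg]
    rw [← hsplit] at h0
    linarith
  -- evaluate each term
  have hterm : ∀ S ∈ (Finset.range n).powerset.erase ∅,
      (μ (E S)).toReal = Real.exp (-((S.card : ℝ) / a (n - S.card + 1))) *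
        (μ (G (Finset.range (n - S.card)))).toReal := by
    intro S hS
    have hSne : S ≠ ∅ := Finset.ne_of_mem_erase hS
    have hSsub : S ⊆ Finset.range n :=
      Finset.mem_powerset.1 (Finset.mem_of_mem_erase hS)
    have hi1 : 1 ≤ S.card := Finset.card_pos.2 (Finset.nonempty_of_ne_empty hSne)
    have hin : S.card ≤ n := by
      have := Finset.card_le_card hSsub
      rwa [Finset.card_range] at this
    have hc : 0 < a (n - S.card + 1) := hapos _ (by omega) (by omega)
    have h1 := measure_inter_CE_factor μ Y hmeas hindep S (Finset.range n \ S)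
      Finset.disjoint_sdiff (a (n - S.card + 1)) a
    have h2 := measure_all_le μ Y hindep S (a (n - S.card + 1))
    have h3 : μ (G (Finset.range n \ S)) = μ (G (Finset.range (n - S.card))) := by
      refine measure_CE_eq μ Y hmeas hindep hident a _ _ ?_
      rw [Finset.card_sdiff_of_subset hSsub, Finset.card_range, Finset.card_range]
    have hval : ∀ j ∈ S, μ {ω | Y j ω ≤ a (n - S.card + 1)} =
        ENNReal.ofReal (Real.exp (-(a (n - S.card + 1))⁻¹)) := by
      intro j _
      rw [hY j, frechetCDF, if_pos hc]
    have hES : μ (E S) =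
        (ENNReal.ofReal (Real.exp (-(a (n - S.card + 1))⁻¹)))^S.card *
          μ (G (Finset.range (n - S.card))) := by
      have e1 : μ (E S) = μ {ω | ∀ j ∈ S, Y j ω ≤ a (n - S.card + 1)} *
          μ {ω | CE (Finset.range n \ S) (fun j => Y j ω) a} := h1
      have e3 : μ {ω | CE (Finset.range n \ S) (fun j => Y j ω) a} =
          μ (G (Finset.range (n - S.card))) := h3
      rw [e1, h2, Finset.prod_congr rfl hval, Finset.prod_const, e3]
    rw [hES, ENNReal.toReal_mul, ENNReal.toReal_pow,
      ENNReal.toReal_ofReal (Real.exp_nonneg _), ← Real.exp_nat_mul]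
    congr 2
    have : a (n - S.card + 1) ≠ 0 := ne_of_gt hc
    field_simp
  -- event identifications
  have hLHS : {ω | ∀ i : Fin n, orderStat n (fun j => Y j ω) (i + 1) ≤ t * x (i + 1)} =
      G (Finset.range n) := Set.ext fun ω => orderStat_event_iff n _ a
  have hRHSev : ∀ i : ℕ,
      {ω | ∀ l : Fin (n - i), orderStat (n - i) (fun j => Y j ω) (l + 1) ≤ t * x (l + 1)} =
      G (Finset.range (n - i)) := fun i => Set.ext fun ω => orderStat_event_iff (n - i) _ a
  rw [hLHS, hmain, Finset.sum_congr rfl (fun S hS => by rw [hterm S hS])]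
  -- group by cardinality
  have hps : ∑ S ∈ (Finset.range n).powerset,
      ((-1 : ℝ) ^ (S.card + 1) * (Real.exp (-((S.card : ℝ) / a (n - S.card + 1))) *
        (μ (G (Finset.range (n - S.card)))).toReal))
      = ∑ i ∈ Finset.range (n + 1), (n.choose i : ℝ) *
        ((-1 : ℝ) ^ (i + 1) * (Real.exp (-((i : ℝ) / a (n - i + 1))) *
          (μ (G (Finset.range (n - i)))).toReal)) := by
    rw [Finset.sum_powerset, Finset.card_range]
    refine Finset.sum_congr rfl fun i _ => ?_
    rw [Finset.sum_congr rfl (fun S hS => by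
      rw [(Finset.mem_powersetCard.1 hS).2])]
    rw [Finset.sum_const, Finset.card_powersetCard, Finset.card_range, nsmul_eq_mul]
  have herase : ∑ S ∈ (Finset.range n).powerset.erase ∅,
      ((-1 : ℝ) ^ (S.card + 1) * (Real.exp (-((S.card : ℝ) / a (n - S.card + 1))) *
        (μ (G (Finset.range (n - S.card)))).toReal))
      = ∑ i ∈ Finset.Icc 1 n, (n.choose i : ℝ) *
        ((-1 : ℝ) ^ (i + 1) * (Real.exp (-((i : ℝ) / a (n - i + 1))) *
          (μ (G (Finset.range (n - i)))).toReal)) := by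
    have hsplit2 := Finset.add_sum_erase _
      (fun S : Finset ℕ => ((-1 : ℝ) ^ (S.card + 1) *
        (Real.exp (-((S.card : ℝ) / a (n - S.card + 1))) *
          (μ (G (Finset.range (n - S.card)))).toReal))) hzero_mem
    have hr : Finset.range (n + 1) = insert 0 (Finset.Icc 1 n) := by
      ext j
      simp only [Finset.mem_range, Finset.mem_insert, Finset.mem_Icc]
      omega
    rw [hps, hr, Finset.sum_insert (by simp)] at hsplit2
    simp only [Finset.card_empty, Nat.choose_zero_right, Nat.cast_one, one_mul] at hsplit2
    linarith
  rw [herase]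
  refine Finset.sum_congr rfl fun i hi => ?_
  rw [hRHSev i]
  ring
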